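/- arXiv:1711.06299 — 3 statements merged into one kernel-verified Lean document; each statement's English description precedes it below -/
import Mathlib

section
/- Let ν > 2 and β > 0 be real numbers, and let C(ν) = Γ((ν+1)/2) / (Γ(ν/2)·√(πν)). Then the upper tail integral of the (unnormalized) Student t density satisfies ∫_{β√(ν/(ν−2))}^{∞} C(ν)·(1 + z²/ν)^{−(ν+1)/2} dz ≤ (√(ν(ν−2))/(ν−1)) · (C(ν)/β) · (1 + β²/(ν−2))^{−(ν−1)/2}. -/
open MeasureTheory Real

theorem student_t_one_sided_tail_bound
    (ν β : ℝ) (hν : 2 < ν) (hβ : 0 < β)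
    (C : ℝ) (hC : C = Real.Gamma ((ν + 1) / 2) / (Real.Gamma (ν / 2) * Real.sqrt (π * ν))) :
    ∫ z in Set.Ioi (β * Real.sqrt (ν / (ν - 2))), C * (1 + z ^ 2 / ν) ^ (-((ν + 1) / 2))
      ≤ Real.sqrt (ν * (ν - 2)) / (ν - 1) * (C / β) * (1 + β ^ 2 / (ν - 2)) ^ (-((ν - 1) / 2)) := by
  have hν0 : 0 < ν := by linarith
  have hν2 : 0 < ν - 2 := by linarith
  have hν1 : 0 < ν - 1 := by linarith
  have hC0 : 0 < C := by
    rw [hC]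
    exact div_pos (Real.Gamma_pos_of_pos (by linarith))
      (mul_pos (Real.Gamma_pos_of_pos (by linarith))
        (Real.sqrt_pos.mpr (by positivity)))
  set t0 : ℝ := β * Real.sqrt (ν / (ν - 2)) with ht0def
  have ht0 : 0 < t0 := mul_pos hβ (Real.sqrt_pos.mpr (div_pos hν0 hν2))
  have hbase : ∀ z : ℝ, 0 < 1 + z ^ 2 / ν := fun z => by positivity
  set K : ℝ := C * ν / ((ν - 1) * t0) with hK
  set F : ℝ → ℝ := fun z => -K * (1 + z ^ 2 / ν) ^ (-((ν - 1) / 2)) with hF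
  set g : ℝ → ℝ := fun z => C / t0 * z * (1 + z ^ 2 / ν) ^ (-((ν + 1) / 2)) with hg
  have hderiv : ∀ z : ℝ, HasDerivAt F (g z) z := by
    intro z
    have hu : HasDerivAt (fun x : ℝ => 1 + x ^ 2 / ν) (2 * z ^ 1 / ν) z :=
      ((hasDerivAt_pow 2 z).div_const ν).const_add 1
    have h1 : HasDerivAt (fun x : ℝ => -K * (1 + x ^ 2 / ν) ^ (-((ν - 1) / 2)))
        (-K * (2 * z ^ 1 / ν * (-((ν - 1) / 2)) * (1 + z ^ 2 / ν) ^ (-((ν - 1) / 2) - 1))) z :=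
      (hu.rpow_const (Or.inl (ne_of_gt (hbase z)))).const_mul (-K)
    have hexp : -((ν - 1) / 2) - 1 = -((ν + 1) / 2) := by ring
    rw [hexp] at h1
    convert h1 using 1
    simp only [hg, hK, pow_one]
    field_simp
  have htends : Filter.Tendsto F Filter.atTop (nhds 0) := by
    have hinner : Filter.Tendsto (fun z : ℝ => 1 + z ^ 2 / ν) Filter.atTop Filter.atTop := by
      apply Filter.tendsto_atTop_add_const_left
      exact (Filter.tendsto_pow_atTop two_ne_zero).atTop_div_const hν0
    have h2 : Filter.Tendsto (fun z : ℝ => (1 + z ^ 2 / ν) ^ (-((ν - 1) / 2)))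
        Filter.atTop (nhds 0) :=
      (tendsto_rpow_neg_atTop (by linarith : (0:ℝ) < (ν - 1) / 2)).comp hinner
    have := h2.const_mul (-K)
    simpa [hF, neg_mul] using this
  have hFcont : ContinuousWithinAt F (Set.Ici t0) t0 :=
    (hderiv t0).continuousAt.continuousWithinAt
  have hderiv' : ∀ x ∈ Set.Ioi t0, HasDerivAt F (g x) x := fun x _ => hderiv x
  have hgpos : ∀ x ∈ Set.Ioi t0, 0 ≤ g x := by
    intro x hx
    have hx0 : 0 < x := lt_trans ht0 hx
    have : 0 < (1 + x ^ 2 / ν) ^ (-((ν + 1) / 2)) := Real.rpow_pos_of_pos (hbase x) _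
    have hct : 0 < C / t0 := div_pos hC0 ht0
    positivity
  have hgint : IntegrableOn g (Set.Ioi t0) :=
    integrableOn_Ioi_deriv_of_nonneg hFcont hderiv' hgpos htends
  have hval : ∫ z in Set.Ioi t0, g z = 0 - F t0 :=
    integral_Ioi_of_hasDerivAt_of_tendsto hFcont hderiv' hgint htends
  -- integrand f
  set f : ℝ → ℝ := fun z => C * (1 + z ^ 2 / ν) ^ (-((ν + 1) / 2)) with hf
  have hfcont : Continuous f := by
    apply Continuous.mul continuous_const
    exact Continuous.rpow_const (continuous_const.add ((continuous_pow 2).div_const ν))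
      (fun z => Or.inl (ne_of_gt (hbase z)))
  have hbound : ∀ x ∈ Set.Ioi t0, f x ≤ g x := by
    intro x hx
    have hx1 : (1:ℝ) ≤ x / t0 := (one_le_div ht0).mpr (le_of_lt hx)
    have hA : 0 ≤ (1 + x ^ 2 / ν) ^ (-((ν + 1) / 2)) := (Real.rpow_pos_of_pos (hbase x) _).le
    have : C * (1 + x ^ 2 / ν) ^ (-((ν + 1) / 2))
        ≤ (x / t0) * (C * (1 + x ^ 2 / ν) ^ (-((ν + 1) / 2))) := by
      nlinarith [mul_nonneg hC0.le hA]
    calc f x ≤ (x / t0) * (C * (1 + x ^ 2 / ν) ^ (-((ν + 1) / 2))) := this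
      _ = g x := by simp only [hg]; ring
  have hfint : IntegrableOn f (Set.Ioi t0) := by
    apply hgint.mono' hfcont.aestronglyMeasurable.restrict
    filter_upwards [ae_restrict_mem measurableSet_Ioi] with x hx
    rw [Real.norm_eq_abs, abs_of_nonneg (by positivity)]
    exact hbound x hx
  have hmono : ∫ z in Set.Ioi t0, f z ≤ ∫ z in Set.Ioi t0, g z :=
    setIntegral_mono_on hfint hgint measurableSet_Ioi hbound
  -- compute the value
  have ht0sq : t0 ^ 2 = β ^ 2 * (ν / (ν - 2)) := by
    rw [ht0def, mul_pow, Real.sq_sqrt (div_pos hν0 hν2).le]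
  have hbase_eq : 1 + t0 ^ 2 / ν = 1 + β ^ 2 / (ν - 2) := by
    rw [ht0sq]; field_simp
  have hsqrt : Real.sqrt (ν / (ν - 2)) * Real.sqrt (ν * (ν - 2)) = ν := by
    rw [← Real.sqrt_mul (by positivity)]
    rw [show ν / (ν - 2) * (ν * (ν - 2)) = ν ^ 2 by field_simp]
    exact Real.sqrt_sq hν0.le
  have hKeq : K = Real.sqrt (ν * (ν - 2)) / (ν - 1) * (C / β) := by
    set s := Real.sqrt (ν / (ν - 2)) with hsdef
    set r := Real.sqrt (ν * (ν - 2)) with hrdef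
    have hs0 : s ≠ 0 := ne_of_gt (Real.sqrt_pos.mpr (div_pos hν0 hν2))
    have h1 : s * r - 1 ≠ 0 := by rw [hsqrt]; exact ne_of_gt hν1
    rw [hK, ht0def, ← hsqrt]
    field_simp
  calc ∫ z in Set.Ioi t0, f z ≤ ∫ z in Set.Ioi t0, g z := hmono
    _ = 0 - F t0 := hval
    _ = K * (1 + t0 ^ 2 / ν) ^ (-((ν - 1) / 2)) := by simp [hF]
    _ = Real.sqrt (ν * (ν - 2)) / (ν - 1) * (C / β) * (1 + β ^ 2 / (ν - 2)) ^ (-((ν - 1) / 2)) := by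
        rw [hbase_eq, hKeq]
end

section
/- Let ν > 2 and β > 0 be real numbers, and let C(ν) = Γ((ν+1)/2) / (Γ(ν/2)·√(πν)). Then the standard Student t density concentrates as follows: ∫_{{z ∈ ℝ : |z| < β√(ν/(ν−2))}} C(ν)·(1 + z²/ν)^{−(ν+1)/2} dz ≥ 1 − 2·(√(ν(ν−2))/(ν−1)) · (C(ν)/β) · (1 + β²/(ν−2))^{−(ν−1)/2}. -/
open MeasureTheory Real Set Filter Topology

lemma real_beta {u v : ℝ} (hu : 0 < u) (hv : 0 < v) :
    ∫ x in (0:ℝ)..1, x ^ (u - 1) * (1 - x) ^ (v - 1) =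
      Real.Gamma u * Real.Gamma v / Real.Gamma (u + v) := by
  have h := Complex.Gamma_mul_Gamma_eq_betaIntegral (s := (u:ℂ)) (t := (v:ℂ))
      (by simpa using hu) (by simpa using hv)
  have hbeta : Complex.betaIntegral u v =
      ((∫ x in (0:ℝ)..1, x ^ (u - 1) * (1 - x) ^ (v - 1) : ℝ) : ℂ) := by
    rw [Complex.betaIntegral, ← intervalIntegral.integral_ofReal]
    refine intervalIntegral.integral_congr fun x hx => ?_
    rw [Set.uIcc_of_le (zero_le_one (α := ℝ))] at hx
    rw [Complex.ofReal_mul, Complex.ofReal_cpow hx.1, Complex.ofReal_cpow (by linarith [hx.2])]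
    push_cast
    ring
  rw [hbeta, ← Complex.ofReal_add, Complex.Gamma_ofReal, Complex.Gamma_ofReal,
    Complex.Gamma_ofReal, ← Complex.ofReal_mul, ← Complex.ofReal_mul] at h
  have h' := Complex.ofReal_inj.mp h
  have hG : Real.Gamma (u + v) ≠ 0 := (Real.Gamma_pos_of_pos (by linarith)).ne'
  field_simp [h']
  rw [h']; ring

lemma half_integral (s : ℝ) :
    ∫ z in Ioi (0:ℝ), (1 + z ^ 2) ^ (-s) =
      (1/2) * ∫ x in (0:ℝ)..1, x ^ (s - 1/2 - 1) * (1 - x) ^ ((1:ℝ)/2 - 1) := by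
  set f : ℝ → ℝ := fun x => Real.sqrt (x⁻¹ - 1) with hf
  set F' : ℝ → ℝ := fun x => -(x ^ 2)⁻¹ / (2 * Real.sqrt (x⁻¹ - 1)) with hF'
  have hsub : ∀ x ∈ Ioo (0:ℝ) 1, 0 < x⁻¹ - 1 := by
    intro x hx
    have := (one_lt_inv₀ hx.1).mpr hx.2
    linarith
  have himg : f '' Ioo 0 1 = Ioi (0:ℝ) := by
    ext z
    constructor
    · rintro ⟨x, hx, rfl⟩
      exact Real.sqrt_pos.mpr (hsub x hx)
    · intro hz
      refine ⟨(1 + z ^ 2)⁻¹, ⟨by positivity, ?_⟩, ?_⟩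
      · rw [inv_lt_one₀ (by positivity)]; have hz' : 0 < z := hz; nlinarith
      · simp only [hf, inv_inv]
        rw [show 1 + z ^ 2 - 1 = z ^ 2 by ring, Real.sqrt_sq hz.le]
  have hderiv : ∀ x ∈ Ioo (0:ℝ) 1, HasDerivWithinAt f (F' x) (Ioo 0 1) x := by
    intro x hx
    have hx0 : x ≠ 0 := hx.1.ne'
    have inner : HasDerivAt (fun y : ℝ => y⁻¹ - 1) (-(x ^ 2)⁻¹) x :=
      (hasDerivAt_inv hx0).sub_const 1
    have h := (Real.hasDerivAt_sqrt (hsub x hx).ne').comp x inner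
    refine h.hasDerivWithinAt.congr_deriv ?_
    simp [hF']
    ring
  have hinj : InjOn f (Ioo 0 1) := by
    have : StrictAntiOn f (Ioo 0 1) := by
      intro x hx y hy hxy
      apply Real.sqrt_lt_sqrt (hsub y hy).le
      have := hx.1; have := hy.1
      gcongr
    exact this.injOn
  have key := integral_image_eq_integral_abs_deriv_smul measurableSet_Ioo hderiv hinj
    (fun z => (1 + z ^ 2) ^ (-s))
  rw [himg] at key
  rw [key]
  have hcong : ∀ x ∈ Ioo (0:ℝ) 1,
      |F' x| • (1 + f x ^ 2) ^ (-s) =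
        (1/2) * (x ^ (s - 1/2 - 1) * (1 - x) ^ ((1:ℝ)/2 - 1)) := by
    intro x hx
    obtain ⟨hx0, hx1⟩ := hx
    have ht : 0 < x⁻¹ - 1 := hsub x ⟨hx0, hx1⟩
    have h1x : 0 < 1 - x := by linarith
    have hfx2 : f x ^ 2 = x⁻¹ - 1 := Real.sq_sqrt ht.le
    have h1 : 1 + f x ^ 2 = x⁻¹ := by rw [hfx2]; ring
    have hsq : Real.sqrt (x⁻¹ - 1) = Real.sqrt (1 - x) / Real.sqrt x := by
      rw [show x⁻¹ - 1 = (1 - x) / x by field_simp, Real.sqrt_div h1x.le]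
    have hxinv : (x⁻¹ : ℝ) ^ (-s) = x ^ s := by
      rw [Real.inv_rpow hx0.le, ← Real.rpow_neg hx0.le, neg_neg]
    rw [smul_eq_mul, h1, hxinv, hF']
    simp only [abs_div, abs_neg, abs_of_pos (show (0:ℝ) < (x ^ 2)⁻¹ by positivity),
      abs_of_pos (show (0:ℝ) < 2 * Real.sqrt (x⁻¹ - 1) by positivity)]
    rw [hsq, Real.sqrt_eq_rpow, Real.sqrt_eq_rpow,
      show ((x:ℝ) ^ 2)⁻¹ = x ^ (-2 : ℝ) by
        rw [← Real.rpow_natCast x 2, ← Real.rpow_neg hx0.le]; norm_num,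
      show (1 - x) ^ ((1:ℝ)/2 - 1) = ((1 - x) ^ ((1:ℝ)/2))⁻¹ by
        rw [show (1:ℝ)/2 - 1 = -(1/2) by norm_num, Real.rpow_neg h1x.le],
      show x ^ (s - 1/2 - 1) = x ^ (-2 : ℝ) * x ^ ((1:ℝ)/2) * x ^ s by
        rw [← Real.rpow_add hx0, ← Real.rpow_add hx0]; ring_nf]
    have hpx : (0:ℝ) < x ^ ((1:ℝ)/2) := Real.rpow_pos_of_pos hx0 _
    have hp1x : (0:ℝ) < (1 - x) ^ ((1:ℝ)/2) := Real.rpow_pos_of_pos h1x _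
    field_simp
  rw [setIntegral_congr_fun measurableSet_Ioo hcong,
    intervalIntegral.integral_of_le zero_le_one, ← integral_Ioc_eq_integral_Ioo,
    ← integral_const_mul]

lemma student_norm {ν : ℝ} (hν : 0 < ν) :
    ∫ z : ℝ, (1 + z ^ 2 / ν) ^ (-((ν + 1) / 2)) =
      Real.sqrt (π * ν) * Real.Gamma (ν / 2) / Real.Gamma ((ν + 1) / 2) := by
  have hsν : 0 < Real.sqrt ν := Real.sqrt_pos.mpr hν
  have h2 := MeasureTheory.Measure.integral_comp_mul_left
    (fun z : ℝ => (1 + z ^ 2 / ν) ^ (-((ν + 1) / 2))) (Real.sqrt ν)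
  simp only [smul_eq_mul] at h2
  have h1 : ∀ x : ℝ, (1 + (Real.sqrt ν * x) ^ 2 / ν) ^ (-((ν + 1) / 2))
      = (1 + x ^ 2) ^ (-((ν + 1) / 2)) := by
    intro x
    rw [mul_pow, Real.sq_sqrt hν.le]
    congr 1
    field_simp
  simp only [h1, abs_inv, abs_of_pos hsν] at h2
  have h3 : ∫ x : ℝ, (1 + x ^ 2) ^ (-((ν + 1) / 2))
      = 2 * ∫ x in Ioi (0:ℝ), (1 + x ^ 2) ^ (-((ν + 1) / 2)) := by
    rw [← integral_comp_abs (f := fun t : ℝ => (1 + t ^ 2) ^ (-((ν + 1) / 2)))]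
    simp [sq_abs]
  have hb := real_beta (u := ν / 2) (v := 1 / 2) (by linarith) (by norm_num)
  have h4 := half_integral ((ν + 1) / 2)
  rw [show (ν + 1) / 2 - 1/2 - 1 = ν / 2 - 1 by ring] at h4
  rw [show (1:ℝ)/2 - 1 = (1:ℝ)/2 - 1 from rfl] at h4
  rw [hb, show ν / 2 + 1 / 2 = (ν + 1) / 2 by ring] at h4
  have : ∫ z : ℝ, (1 + z ^ 2 / ν) ^ (-((ν + 1) / 2))
      = Real.sqrt ν * ∫ x : ℝ, (1 + x ^ 2) ^ (-((ν + 1) / 2)) := by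
    rw [h2]; field_simp
  rw [this, h3, h4, Real.Gamma_one_half_eq,
    Real.sqrt_mul pi_pos.le, ]
  ring

lemma student_integrable {ν : ℝ} (hν : 1 ≤ ν) :
    Integrable (fun z : ℝ => (1 + z ^ 2 / ν) ^ (-((ν + 1) / 2))) := by
  have hν0 : 0 < ν := by linarith
  have hbase : ∀ z : ℝ, (1:ℝ) ≤ 1 + z ^ 2 / ν := fun z => by
    have : 0 ≤ z ^ 2 / ν := by positivity
    linarith
  refine Integrable.mono' ((integrable_inv_one_add_sq).const_mul ν) ?_ ?_
  · refine Continuous.aestronglyMeasurable ?_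
    refine Continuous.rpow_const (by continuity) (fun z => Or.inl ?_)
    exact (lt_of_lt_of_le one_pos (hbase z)).ne'
  · filter_upwards with z
    have h0 : (0:ℝ) < 1 + z ^ 2 / ν := lt_of_lt_of_le one_pos (hbase z)
    rw [Real.norm_eq_abs, abs_of_nonneg (Real.rpow_nonneg h0.le _)]
    calc (1 + z ^ 2 / ν) ^ (-((ν + 1) / 2))
        ≤ (1 + z ^ 2 / ν) ^ (-1 : ℝ) :=
          Real.rpow_le_rpow_of_exponent_le (hbase z) (by linarith)
      _ = (1 + z ^ 2 / ν)⁻¹ := by rw [Real.rpow_neg_one]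
      _ ≤ ν * (1 + z ^ 2)⁻¹ := by
          rw [← one_div, ← one_div, mul_one_div, div_le_div_iff₀ h0 (by positivity)]
          have : ν * (1 + z ^ 2 / ν) = ν + z ^ 2 := by field_simp
          nlinarith

lemma student_tail {ν a : ℝ} (hν : 2 < ν) (ha : 0 < a) :
    (∫ z in Ioi a, z * (1 + z ^ 2 / ν) ^ (-((ν + 1) / 2))
      = ν / (ν - 1) * (1 + a ^ 2 / ν) ^ (-((ν - 1) / 2))) ∧
    IntegrableOn (fun z : ℝ => z * (1 + z ^ 2 / ν) ^ (-((ν + 1) / 2))) (Ioi a) := by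
  have hν0 : 0 < ν := by linarith
  have hν1 : 0 < ν - 1 := by linarith
  set g : ℝ → ℝ := fun z => -(ν / (ν - 1)) * (1 + z ^ 2 / ν) ^ (-((ν - 1) / 2)) with hg
  have hbase : ∀ z : ℝ, (0:ℝ) < 1 + z ^ 2 / ν := fun z => by positivity
  have hderiv : ∀ z : ℝ, HasDerivAt g (z * (1 + z ^ 2 / ν) ^ (-((ν + 1) / 2))) z := by
    intro z
    have inner : HasDerivAt (fun y : ℝ => 1 + y ^ 2 / ν) (2 * z / ν) z := by
      have := ((hasDerivAt_pow 2 z).div_const ν).const_add 1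
      simpa using this
    have h := (inner.rpow_const (p := -((ν - 1) / 2)) (Or.inl (hbase z).ne')).const_mul
      (-(ν / (ν - 1)))
    refine h.congr_deriv ?_
    rw [show -((ν - 1) / 2) - 1 = -((ν + 1) / 2) by ring]
    field_simp
  have htend : Tendsto g atTop (𝓝 0) := by
    have h1 : Tendsto (fun z : ℝ => 1 + z ^ 2 / ν) atTop atTop := by
      apply tendsto_atTop_add_const_left
      exact (tendsto_pow_atTop two_ne_zero).atTop_div_const hν0
    have h2 := (tendsto_rpow_neg_atTop (y := (ν - 1) / 2) (by linarith)).comp h1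
    have h3 := h2.const_mul (-(ν / (ν - 1)))
    simpa [hg, Function.comp_def, neg_mul] using h3
  have hpos : ∀ z ∈ Ioi a, 0 ≤ z * (1 + z ^ 2 / ν) ^ (-((ν + 1) / 2)) := by
    intro z hz
    have : 0 < z := ha.trans hz
    positivity
  constructor
  · rw [integral_Ioi_of_hasDerivAt_of_nonneg' (fun x _ => hderiv x) hpos htend]
    simp [hg]
  · exact integrableOn_Ioi_deriv_of_nonneg' (fun x _ => hderiv x) hpos htend

theorem student_t_two_sided_concentration
    (ν β : ℝ) (hν : 2 < ν) (hβ : 0 < β)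
    (C : ℝ) (hC : C = Real.Gamma ((ν + 1) / 2) / (Real.Gamma (ν / 2) * Real.sqrt (π * ν))) :
    1 - 2 * (Real.sqrt (ν * (ν - 2)) / (ν - 1)) * (C / β) * (1 + β ^ 2 / (ν - 2)) ^ (-((ν - 1) / 2))
      ≤ ∫ z in {z : ℝ | |z| < β * Real.sqrt (ν / (ν - 2))},
          C * (1 + z ^ 2 / ν) ^ (-((ν + 1) / 2)) := by
  have hν0 : 0 < ν := by linarith
  have hν2 : 0 < ν - 2 := by linarith
  have hν1 : 0 < ν - 1 := by linarith
  set a : ℝ := β * Real.sqrt (ν / (ν - 2)) with ha_def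
  have ha : 0 < a := mul_pos hβ (Real.sqrt_pos.mpr (by positivity))
  set f0 : ℝ → ℝ := fun z => (1 + z ^ 2 / ν) ^ (-((ν + 1) / 2)) with hf0
  have hGp1 : 0 < Real.Gamma ((ν + 1) / 2) := Real.Gamma_pos_of_pos (by linarith)
  have hGp2 : 0 < Real.Gamma (ν / 2) := Real.Gamma_pos_of_pos (by linarith)
  have hsπν : 0 < Real.sqrt (π * ν) := Real.sqrt_pos.mpr (by positivity)
  have hC0 : 0 < C := by rw [hC]; positivity
  have hInt : Integrable f0 := student_integrable (by linarith)
  have hnorm : C * ∫ z : ℝ, f0 z = 1 := by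
    rw [hf0, student_norm hν0, hC]; field_simp
  obtain ⟨htail, htailInt⟩ := student_tail (a := a) hν ha
  have ha2 : a ^ 2 / ν = β ^ 2 / (ν - 2) := by
    rw [ha_def, mul_pow, Real.sq_sqrt (by positivity : (0:ℝ) ≤ ν / (ν - 2))]
    field_simp
  have hSeq : {z : ℝ | |z| < a} = Ioo (-a) a := by ext z; simp [abs_lt]
  rw [hSeq]
  have hpull : (∫ z in Ioo (-a) a, C * (1 + z ^ 2 / ν) ^ (-((ν + 1) / 2)))
      = C * ∫ z in Ioo (-a) a, f0 z := integral_const_mul C f0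
  rw [hpull]
  have hsplit : ∫ z in Ioo (-a) a, f0 z = (∫ z : ℝ, f0 z) - 2 * ∫ z in Ioi a, f0 z := by
    have hcompl := integral_add_compl (measurableSet_Ioo : MeasurableSet (Ioo (-a) a)) hInt
    have hc : (Ioo (-a) a)ᶜ = Iic (-a) ∪ Ici a := by
      ext x
      simp only [mem_compl_iff, mem_Ioo, mem_union, mem_Iic, mem_Ici, not_and_or, not_lt]
    have hdisj : Disjoint (Iic (-a)) (Ici a) := by
      refine Set.disjoint_left.mpr fun x hx hx' => ?_
      simp only [mem_Iic, mem_Ici] at hx hx'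
      linarith
    have hu : ∫ z in (Ioo (-a) a)ᶜ, f0 z = (∫ z in Iic (-a), f0 z) + ∫ z in Ici a, f0 z := by
      rw [hc, setIntegral_union hdisj measurableSet_Ici hInt.integrableOn hInt.integrableOn]
    have heven : ∀ x : ℝ, f0 (-x) = f0 x := fun x => by simp [hf0, neg_sq]
    have hrefl : ∫ z in Iic (-a), f0 z = ∫ z in Ioi a, f0 z := by
      calc ∫ z in Iic (-a), f0 z = ∫ z in Iic (-a), f0 (-z) := by simp_rw [heven]
        _ = ∫ z in Ioi (-(-a)), f0 z := integral_comp_neg_Iic (-a) f0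
        _ = ∫ z in Ioi a, f0 z := by rw [neg_neg]
    have hIci : ∫ z in Ici a, f0 z = ∫ z in Ioi a, f0 z := integral_Ici_eq_integral_Ioi
    rw [hu, hrefl, hIci] at hcompl
    linarith
  rw [hsplit, mul_sub C, hnorm]
  have hbd : ∫ z in Ioi a, f0 z
      ≤ 1 / a * (ν / (ν - 1) * (1 + a ^ 2 / ν) ^ (-((ν - 1) / 2))) := by
    rw [← htail, ← integral_const_mul]
    refine setIntegral_mono_on hInt.integrableOn (htailInt.const_mul (1 / a))
      measurableSet_Ioi ?_
    intro z hz
    have hz0 : a < z := hz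
    have h0 : (0:ℝ) ≤ f0 z := Real.rpow_nonneg (by positivity) _
    calc f0 z = f0 z * 1 := (mul_one _).symm
      _ ≤ f0 z * (z / a) := by
          refine mul_le_mul_of_nonneg_left ?_ h0
          rw [le_div_iff₀ ha]; linarith
      _ = 1 / a * (z * f0 z) := by ring
  rw [ha2] at hbd
  set X : ℝ := (1 + β ^ 2 / (ν - 2)) ^ (-((ν - 1) / 2)) with hX
  have hX0 : 0 ≤ X := Real.rpow_nonneg (by positivity) _
  have hcoef : Real.sqrt (ν * (ν - 2)) / β = ν / a := by
    have h1 : Real.sqrt ν * Real.sqrt ν = ν := Real.mul_self_sqrt hν0.le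
    have h2 : 0 < Real.sqrt (ν - 2) := Real.sqrt_pos.mpr hν2
    rw [div_eq_div_iff hβ.ne' ha.ne', ha_def, Real.sqrt_mul hν0.le, Real.sqrt_div hν0.le]
    field_simp
    linear_combination h1
  have heq : 2 * (Real.sqrt (ν * (ν - 2)) / (ν - 1)) * (C / β) * X
      = C * (2 * (1 / a * (ν / (ν - 1) * X))) := by
    calc 2 * (Real.sqrt (ν * (ν - 2)) / (ν - 1)) * (C / β) * X
        = 2 * C / (ν - 1) * (Real.sqrt (ν * (ν - 2)) / β) * X := by ring
      _ = 2 * C / (ν - 1) * (ν / a) * X := by rw [hcoef]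
      _ = C * (2 * (1 / a * (ν / (ν - 1) * X))) := by ring
  rw [heq]
  refine sub_le_sub_left ?_ 1
  have := mul_le_mul_of_nonneg_left (a := C) (by linarith : 2 * ∫ z in Ioi a, f0 z
      ≤ 2 * (1 / a * (ν / (ν - 1) * X))) hC0.le
  exact this
end

section
/- Let ν > 2, β > 0, μ ∈ ℝ and λ > 0 be real numbers, let C(ν) = Γ((ν+1)/2)/(Γ(ν/2)·√(πν)), and let σ = √(ν/(ν−2))·λ (so that σ² is the variance of the nonstandardized t-distribution T_ν(μ, λ)). Let f(x) = (C(ν)/λ)·(1 + ((x−μ)/λ)²/ν)^{−(ν+1)/2} be the density of T_ν(μ, λ). Then ∫_{{x ∈ ℝ : |x−μ| < βσ}} f(x) dx ≥ 1 − 2·(ν/(ν−1))·(C(ν)/β)·(1 + β²/ν)^{−(ν−1)/2}. -/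
open MeasureTheory Real Set Filter Topology

lemma integrable_one_add_sq_rpow' {p : ℝ} (hp : 1 ≤ p) :
    Integrable (fun x : ℝ => (1 + x ^ 2) ^ (-p)) := by
  have hbase : ∀ x : ℝ, (0:ℝ) < 1 + x ^ 2 := fun x => by positivity
  apply integrable_inv_one_add_sq.mono'
  · apply Continuous.aestronglyMeasurable
    exact (continuous_const.add (continuous_pow 2)).rpow_const
      (fun x => Or.inl (hbase x).ne')
  · filter_upwards with x
    rw [Real.norm_eq_abs, abs_of_nonneg (Real.rpow_nonneg (hbase x).le _), ← Real.rpow_neg_one]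
    exact Real.rpow_le_rpow_of_exponent_le (by nlinarith [sq_nonneg x]) (by linarith)

lemma hasDerivAt_F {p : ℝ} (hp : 1 < p) (x : ℝ) :
    HasDerivAt (fun x : ℝ => -(1 / (2 * (p - 1))) * (1 + x ^ 2) ^ (-(p - 1)))
      (x * (1 + x ^ 2) ^ (-p)) x := by
  have hbase : (0:ℝ) < 1 + x ^ 2 := by positivity
  have h1 : HasDerivAt (fun x : ℝ => 1 + x ^ 2) (2 * x) x := by
    simpa using (hasDerivAt_pow 2 x).const_add 1
  have h2 : HasDerivAt (fun y : ℝ => y ^ (-(p - 1))) (-(p - 1) * (1 + x ^ 2) ^ (-(p - 1) - 1))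
      (1 + x ^ 2) := Real.hasDerivAt_rpow_const (Or.inl hbase.ne')
  have h3 := (h2.comp x h1).const_mul (-(1 / (2 * (p - 1))))
  refine HasDerivAt.congr_deriv h3 ?_
  have h4 : -(p - 1) - 1 = -p := by ring
  rw [h4]
  have hne : p - 1 ≠ 0 := ne_of_gt (by linarith)
  generalize (1 + x ^ 2 : ℝ) ^ (-p) = A
  field_simp

lemma tendsto_F {p : ℝ} (hp : 1 < p) :
    Tendsto (fun x : ℝ => -(1 / (2 * (p - 1))) * (1 + x ^ 2) ^ (-(p - 1))) atTop (𝓝 0) := by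
  have h1 : Tendsto (fun x : ℝ => 1 + x ^ 2) atTop atTop :=
    tendsto_atTop_add_const_left _ _ (tendsto_pow_atTop two_ne_zero)
  have h2 := (tendsto_rpow_neg_atTop (by linarith : (0:ℝ) < p - 1)).comp h1
  simpa using h2.const_mul (-(1 / (2 * (p - 1))))

lemma integral_Ioi_x_mul {p c : ℝ} (hp : 1 < p) (hc : 0 < c) :
    ∫ x in Ioi c, x * (1 + x ^ 2) ^ (-p)
      = 1 / (2 * (p - 1)) * (1 + c ^ 2) ^ (-(p - 1)) := by
  rw [integral_Ioi_of_hasDerivAt_of_nonneg ((hasDerivAt_F hp c).continuousAt.continuousWithinAt)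
    (fun x _ => hasDerivAt_F hp x)
    (fun x hx => by
      have : (0:ℝ) < x := lt_trans hc hx
      positivity)
    (tendsto_F hp)]
  generalize (1 + c ^ 2 : ℝ) ^ (-(p - 1)) = A
  ring

lemma integrableOn_x_mul {p c : ℝ} (hp : 1 < p) (hc : 0 < c) :
    IntegrableOn (fun x => x * (1 + x ^ 2) ^ (-p)) (Ioi c) :=
  integrableOn_Ioi_deriv_of_nonneg ((hasDerivAt_F hp c).continuousAt.continuousWithinAt)
    (fun x _ => hasDerivAt_F hp x)
    (fun x hx => by
      have : (0:ℝ) < x := lt_trans hc hx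
      positivity)
    (tendsto_F hp)

lemma tail_bound {p c : ℝ} (hp : 1 < p) (hc : 0 < c) :
    ∫ x in Ioi c, (1 + x ^ 2) ^ (-p)
      ≤ 1 / (2 * c * (p - 1)) * (1 + c ^ 2) ^ (-(p - 1)) := by
  have key : ∫ x in Ioi c, (1 + x ^ 2) ^ (-p)
      ≤ ∫ x in Ioi c, (1 / c) * (x * (1 + x ^ 2) ^ (-p)) := by
    apply setIntegral_mono_on
    · exact (integrable_one_add_sq_rpow' hp.le).integrableOn
    · exact ((integrableOn_x_mul hp hc).const_mul _)
    · exact measurableSet_Ioi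
    · intro x hx
      have hx' : c < x := hx
      have hb : (0:ℝ) ≤ (1 + x ^ 2) ^ (-p) := Real.rpow_nonneg (by positivity) _
      have h1 : (1:ℝ) ≤ 1 / c * x := by
        rw [div_mul_eq_mul_div, le_div_iff₀ hc]
        linarith
      calc (1 + x ^ 2) ^ (-p) = 1 * ((1 + x ^ 2) ^ (-p)) := (one_mul _).symm
        _ ≤ 1 / c * x * ((1 + x ^ 2) ^ (-p)) := mul_le_mul_of_nonneg_right h1 hb
        _ = 1 / c * (x * ((1 + x ^ 2) ^ (-p))) := by ring
  rw [integral_const_mul, integral_Ioi_x_mul hp hc] at key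
  calc ∫ x in Ioi c, (1 + x ^ 2) ^ (-p) ≤ _ := key
    _ = 1 / (2 * c * (p - 1)) * (1 + c ^ 2) ^ (-(p - 1)) := by
        generalize (1 + c ^ 2 : ℝ) ^ (-(p - 1)) = A
        have hne : p - 1 ≠ 0 := ne_of_gt (by linarith)
        field_simp

lemma hbnd_aux {C ν β s A : ℝ} (hβ : 0 < β) (hν1 : ν - 1 ≠ 0) (hs : 0 < s)
    (hs2 : s * s = ν) :
    C * s * (2 * (1 / (2 * (β / s) * ((ν - 1) / 2)) * A))
      = 2 * (ν / (ν - 1)) * (C / β) * A := by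
  have hsne : s ≠ 0 := hs.ne'
  subst hs2
  field_simp

lemma beta_real {u w : ℝ} (hu : 0 < u) (hw : 0 < w) :
    ∫ v in Ioo (0:ℝ) 1, v ^ (u - 1) * (1 - v) ^ (w - 1) =
      Real.Gamma u * Real.Gamma w / Real.Gamma (u + w) := by
  have h := Complex.Gamma_mul_Gamma_eq_betaIntegral
    (by simpa using hu : 0 < Complex.re (u : ℂ)) (by simpa using hw : 0 < Complex.re (w : ℂ))
  have heq : Complex.betaIntegral (u : ℂ) (w : ℂ) =
      ((∫ v in (0:ℝ)..1, v ^ (u - 1) * (1 - v) ^ (w - 1) : ℝ) : ℂ) := by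
    rw [Complex.betaIntegral, ← intervalIntegral.integral_ofReal]
    apply intervalIntegral.integral_congr
    intro x hx
    rw [uIcc_of_le zero_le_one] at hx
    have hx0 : (0:ℝ) ≤ x := hx.1
    have hx1 : (0:ℝ) ≤ 1 - x := by linarith [hx.2]
    show (x:ℂ) ^ ((u:ℂ) - 1) * (1 - (x:ℂ)) ^ ((w:ℂ) - 1) = ((x ^ (u - 1) * (1 - x) ^ (w - 1) : ℝ) : ℂ)
    rw [Complex.ofReal_mul, Complex.ofReal_cpow hx0, Complex.ofReal_cpow hx1]
    push_cast
    ring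
  rw [heq, Complex.Gamma_ofReal, Complex.Gamma_ofReal,
    show ((u:ℂ) + (w:ℂ)) = ((u + w : ℝ) : ℂ) by push_cast; ring, Complex.Gamma_ofReal,
    ← Complex.ofReal_mul, ← Complex.ofReal_mul] at h
  have h' := Complex.ofReal_inj.mp h
  have hG : Real.Gamma (u + w) ≠ 0 := (Real.Gamma_pos_of_pos (by linarith)).ne'
  have hI : ∫ v in (0:ℝ)..1, v ^ (u - 1) * (1 - v) ^ (w - 1)
      = Real.Gamma u * Real.Gamma w / Real.Gamma (u + w) := by
    field_simp
    linarith [h']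
  rw [← hI, intervalIntegral.integral_of_le zero_le_one, integral_Ioc_eq_integral_Ioo]

lemma integral_Ioi_one_add_sq {p : ℝ} (hp : 3/2 < p) :
    ∫ x in Ioi (0:ℝ), (1 + x ^ 2) ^ (-p)
      = Real.sqrt π * Real.Gamma (p - 1/2) / (2 * Real.Gamma p) := by
  set φ : ℝ → ℝ := fun v => Real.sqrt (v / (1 - v)) with hφ
  set φ' : ℝ → ℝ := fun v => 1 / (1 - v) ^ 2 * (1 / (2 * Real.sqrt (v / (1 - v)))) with hφ'
  have himg : φ '' Ioo 0 1 = Ioi (0:ℝ) := by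
    ext x
    constructor
    · rintro ⟨v, ⟨hv0, hv1⟩, rfl⟩
      exact Real.sqrt_pos.mpr (div_pos hv0 (by linarith))
    · intro hx
      have hx0 : (0:ℝ) < x := hx
      refine ⟨x ^ 2 / (1 + x ^ 2), ⟨by positivity, ?_⟩, ?_⟩
      · rw [div_lt_one (by positivity)]; nlinarith
      · have hr : x ^ 2 / (1 + x ^ 2) / (1 - x ^ 2 / (1 + x ^ 2)) = x ^ 2 := by
          have h1 : (1:ℝ) + x ^ 2 ≠ 0 := by positivity
          field_simp
          ring
        simp only [hφ, hr]
        exact Real.sqrt_sq hx0.le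
  have hderiv : ∀ v ∈ Ioo (0:ℝ) 1, HasDerivWithinAt φ (φ' v) (Ioo 0 1) v := by
    intro v ⟨hv0, hv1⟩
    have h1v : (0:ℝ) < 1 - v := by linarith
    have hu : HasDerivAt (fun v : ℝ => v / (1 - v)) (1 / (1 - v) ^ 2) v := by
      have := (hasDerivAt_id v).div ((hasDerivAt_const v 1).sub (hasDerivAt_id v)) h1v.ne'
      refine this.congr_deriv ?_
      show ((1:ℝ) * (1 - v) - v * (0 - 1)) / (1 - v) ^ 2 = 1 / (1 - v) ^ 2
      ring
    have hs : HasDerivAt Real.sqrt (1 / (2 * Real.sqrt (v / (1 - v)))) (v / (1 - v)) :=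
      Real.hasDerivAt_sqrt (div_pos hv0 h1v).ne'
    have := hs.comp v hu
    refine HasDerivAt.hasDerivWithinAt ?_
    refine this.congr_deriv ?_
    ring
  have hinj : InjOn φ (Ioo 0 1) := by
    intro v1 ⟨h10, h11⟩ v2 ⟨h20, h21⟩ heq
    have e1 : v1 / (1 - v1) = v2 / (1 - v2) := by
      have := congrArg (fun t => t ^ 2) heq
      simpa [hφ, Real.sq_sqrt (div_nonneg h10.le (by linarith : (0:ℝ) ≤ 1 - v1)),
        Real.sq_sqrt (div_nonneg h20.le (by linarith : (0:ℝ) ≤ 1 - v2))] using this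
    have h1 : (1:ℝ) - v1 ≠ 0 := by intro h; linarith
    have h2 : (1:ℝ) - v2 ≠ 0 := by intro h; linarith
    field_simp at e1
    linarith
  have key := integral_image_eq_integral_abs_deriv_smul measurableSet_Ioo hderiv hinj
    (fun x => (1 + x ^ 2) ^ (-p))
  rw [himg] at key
  rw [key]
  have hpt : ∀ v ∈ Ioo (0:ℝ) 1,
      |φ' v| • ((1 + φ v ^ 2) ^ (-p))
        = (1/2 : ℝ) * (v ^ ((1:ℝ)/2 - 1) * (1 - v) ^ ((p - 1/2) - 1)) := by
    intro v ⟨hv0, hv1⟩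
    have h1v : (0:ℝ) < 1 - v := by linarith
    have hsq : φ v ^ 2 = v / (1 - v) := Real.sq_sqrt (div_nonneg hv0.le h1v.le)
    have hbase : 1 + v / (1 - v) = (1 - v)⁻¹ := by field_simp; ring
    have hφpos : 0 < φ' v := by
      have hs : 0 < Real.sqrt (v / (1 - v)) := Real.sqrt_pos.mpr (div_pos hv0 h1v)
      apply mul_pos (by positivity)
      exact div_pos one_pos (by linarith)
    rw [hsq, hbase, smul_eq_mul, abs_of_pos hφpos]
    rw [Real.inv_rpow h1v.le, Real.rpow_neg h1v.le, inv_inv]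
    set a := v ^ ((1:ℝ)/2) with haa
    set b := (1 - v) ^ ((1:ℝ)/2) with hbb
    have ha : 0 < a := Real.rpow_pos_of_pos hv0 _
    have hb : 0 < b := Real.rpow_pos_of_pos h1v _
    have ha2 : a * a = v := by
      rw [haa, ← Real.rpow_add hv0]; norm_num
    have hb2 : b * b = 1 - v := by
      rw [hbb, ← Real.rpow_add h1v]; norm_num
    have hsqrt : Real.sqrt (v / (1 - v)) = a / b := by
      rw [Real.sqrt_div hv0.le, Real.sqrt_eq_rpow, Real.sqrt_eq_rpow]
    have hr1 : v ^ ((1:ℝ)/2 - 1) = a / v := by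
      rw [Real.rpow_sub hv0, Real.rpow_one]
    have hr2 : (1 - v) ^ ((p - 1/2) - 1) = (1 - v) ^ p / b / (1 - v) := by
      rw [show (p - 1/2) - 1 = p - 1/2 - 1 by ring, Real.rpow_sub h1v, Real.rpow_sub h1v,
        Real.rpow_one]
    show 1 / (1 - v) ^ 2 * (1 / (2 * Real.sqrt (v / (1 - v)))) * (1 - v) ^ p = _
    rw [hsqrt, hr1, hr2]
    rw [show (1:ℝ) - v = b * b from hb2.symm, show v = a * a from ha2.symm]
    have hP : (0:ℝ) ≤ (b * b) ^ p := Real.rpow_nonneg (by positivity) _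
    field_simp
  rw [setIntegral_congr_fun measurableSet_Ioo hpt, integral_const_mul,
    beta_real (by norm_num : (0:ℝ) < 1/2) (by linarith : (0:ℝ) < p - 1/2),
    show (1:ℝ)/2 + (p - 1/2) = p by ring, Real.Gamma_one_half_eq]
  field_simp

theorem nonstandardized_t_concentration
    (ν β μ l : ℝ) (hν : 2 < ν) (hβ : 0 < β) (hl : 0 < l)
    (C : ℝ) (hC : C = Real.Gamma ((ν + 1) / 2) / (Real.Gamma (ν / 2) * Real.sqrt (π * ν)))
    (σ : ℝ) (hσ : σ = Real.sqrt (ν / (ν - 2)) * l)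
    (f : ℝ → ℝ)
    (hf : f = fun x => C / l * (1 + ((x - μ) / l) ^ 2 / ν) ^ (-((ν + 1) / 2))) :
    1 - 2 * (ν / (ν - 1)) * (C / β) * (1 + β ^ 2 / ν) ^ (-((ν - 1) / 2))
      ≤ ∫ x in {x : ℝ | |x - μ| < β * σ}, f x := by
  have hν0 : (0:ℝ) < ν := by linarith
  have hπ := Real.pi_pos
  set p : ℝ := (ν + 1) / 2 with hpdef
  have hp : 3/2 < p := by rw [hpdef]; linarith
  have hp1 : (1:ℝ) < p := by linarith
  have hG1 : 0 < Real.Gamma ((ν + 1) / 2) := Real.Gamma_pos_of_pos (by linarith)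
  have hG2 : 0 < Real.Gamma (ν / 2) := Real.Gamma_pos_of_pos (by linarith)
  have hGp : Real.Gamma p ≠ 0 := by rw [hpdef]; exact hG1.ne'
  have hsν : 0 < Real.sqrt ν := Real.sqrt_pos.mpr hν0
  have hsπ : 0 < Real.sqrt π := Real.sqrt_pos.mpr hπ
  have hCpos : 0 < C := by
    rw [hC]
    exact div_pos hG1 (mul_pos hG2 (Real.sqrt_pos.mpr (by positivity)))
  have hσpos : 0 < σ := by
    rw [hσ]
    exact mul_pos (Real.sqrt_pos.mpr (div_pos hν0 (by linarith))) hl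
  set k : ℝ := l * Real.sqrt ν with hkdef
  have hk : 0 < k := mul_pos hl hsν
  set a0 : ℝ := β * σ / k with ha0def
  have ha0 : 0 < a0 := div_pos (mul_pos hβ hσpos) hk
  set c0 : ℝ := β / Real.sqrt ν with hc0def
  have hc0 : 0 < c0 := div_pos hβ hsν
  set h : ℝ → ℝ := fun u => (1 + u ^ 2) ^ (-p) with hhdef
  have hint : Integrable h := integrable_one_add_sq_rpow' (by linarith)
  have hh0 : ∀ u, 0 ≤ h u := fun u => Real.rpow_nonneg (by positivity) _
  have hset : {x : ℝ | |x - μ| < β * σ} = Ioo (μ - β * σ) (μ + β * σ) := by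
    ext x
    simp only [mem_setOf_eq, mem_Ioo, abs_lt]
    constructor <;> rintro ⟨h1, h2⟩ <;> constructor <;> linarith
  have himg : (fun u => μ + k * u) '' Ioo (-a0) a0 = Ioo (μ - β * σ) (μ + β * σ) := by
    have h1 : (fun u : ℝ => μ + k * u) = (fun x : ℝ => μ + x) ∘ (fun u : ℝ => k * u) := rfl
    rw [h1, image_comp, image_mul_left_Ioo hk, image_const_add_Ioo]
    have hka : k * a0 = β * σ := by
      rw [ha0def, mul_div_cancel₀ _ hk.ne']
    rw [mul_neg, hka]
    congr 1
  have hcov : ∫ x in Ioo (μ - β * σ) (μ + β * σ), f x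
      = ∫ u in Ioo (-a0) a0, |k| • f (μ + k * u) := by
    rw [← himg]
    refine integral_image_eq_integral_abs_deriv_smul measurableSet_Ioo
      (fun u _ => ?_) (fun u1 _ u2 _ hequ => ?_) f
    · have : HasDerivAt (fun u : ℝ => μ + k * u) k u := by
        simpa using ((hasDerivAt_id u).const_mul k).const_add μ
      exact this.hasDerivWithinAt
    · exact mul_left_cancel₀ hk.ne' (add_left_cancel hequ)
  have hpoint : ∀ u : ℝ, |k| • f (μ + k * u) = (C * Real.sqrt ν) * h u := by
    intro u
    have harg : (μ + k * u - μ) / l = Real.sqrt ν * u := by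
      rw [hkdef]; field_simp; ring
    have hsq : (Real.sqrt ν * u) ^ 2 / ν = u ^ 2 := by
      rw [mul_pow, Real.sq_sqrt hν0.le, mul_comm, mul_div_assoc, div_self hν0.ne', mul_one]
    rw [hf, abs_of_pos hk, smul_eq_mul]
    simp only [harg, hsq]
    show k * (C / l * (1 + u ^ 2) ^ (-p)) = _
    rw [hhdef, hkdef]
    field_simp
  set I : ℝ := ∫ u : ℝ, h u with hIdef
  set T : ℝ := ∫ u in Ioi a0, h u with hTdef
  have hIoo : ∫ u in Ioo (-a0) a0, h u = I - 2 * T := by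
    have hsplit := integral_add_compl (s := Ioo (-a0) a0) measurableSet_Ioo hint
    have hcompl : (Ioo (-a0) a0)ᶜ = Iic (-a0) ∪ Ici a0 := by
      ext x
      simp only [mem_compl_iff, mem_Ioo, not_and_or, not_lt, mem_union, mem_Iic, mem_Ici]
    have hdisj : Disjoint (Iic (-a0)) (Ici a0) :=
      Iic_disjoint_Ici.mpr (not_le.mpr (by linarith))
    have hunion : ∫ u in Iic (-a0) ∪ Ici a0, h u
        = (∫ u in Iic (-a0), h u) + ∫ u in Ici a0, h u :=
      setIntegral_union hdisj measurableSet_Ici hint.integrableOn hint.integrableOn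
    have hleft : ∫ u in Iic (-a0), h u = T := by
      rw [← integral_comp_neg_Ioi]
      simp only [hhdef, neg_sq]
      rfl
    have hright : ∫ u in Ici a0, h u = T := integral_Ici_eq_integral_Ioi
    rw [hcompl, hunion, hleft, hright, ← hIdef] at hsplit
    linarith
  have hc0a0 : c0 ≤ a0 := by
    have h1 : (1:ℝ) ≤ Real.sqrt (ν / (ν - 2)) := by
      rw [show (1:ℝ) = Real.sqrt 1 from Real.sqrt_one.symm]
      apply Real.sqrt_le_sqrt
      rw [le_div_iff₀ (by linarith)]
      linarith
    have hlσ : l ≤ σ := by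
      rw [hσ]; nlinarith
    rw [hc0def, ha0def, hkdef, div_le_div_iff₀ hsν (mul_pos hl hsν)]
    nlinarith [mul_le_mul_of_nonneg_left hlσ hβ.le, hsν.le]
  have hTle : T ≤ ∫ u in Ioi c0, h u := by
    apply setIntegral_mono_set hint.integrableOn
    · filter_upwards with u using hh0 u
    · exact (Ioi_subset_Ioi hc0a0).eventuallyLE
  have hTval : T ≤ 1 / (2 * c0 * (p - 1)) * (1 + c0 ^ 2) ^ (-(p - 1)) :=
    le_trans hTle (tail_bound hp1 hc0)
  have hIval : I = Real.sqrt π * Real.Gamma (p - 1/2) / Real.Gamma p := by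
    have hsplit0 := integral_add_compl (s := Ioi (0:ℝ)) measurableSet_Ioi hint
    rw [compl_Ioi] at hsplit0
    have hneg : ∫ u in Iic (-(0:ℝ)), h u = ∫ u in Ioi (0:ℝ), h u := by
      rw [← integral_comp_neg_Ioi]
      simp only [hhdef, neg_sq]
    rw [neg_zero] at hneg
    have hval : ∫ u in Ioi (0:ℝ), h u
        = Real.sqrt π * Real.Gamma (p - 1/2) / (2 * Real.Gamma p) := integral_Ioi_one_add_sq hp
    rw [hneg, hval, ← hIdef] at hsplit0
    rw [← hsplit0]
    field_simp
    ring
  have hnorm : C * Real.sqrt ν * I = 1 := by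
    rw [hIval, hC, show p - 1/2 = ν/2 by rw [hpdef]; ring, Real.sqrt_mul hπ.le]
    have hGp' : Real.Gamma ((ν + 1) / 2) ≠ 0 := hG1.ne'
    rw [show Real.Gamma p = Real.Gamma ((ν + 1) / 2) by rw [hpdef]]
    field_simp
  have hbnd : C * Real.sqrt ν * (2 * (1 / (2 * c0 * (p - 1)) * (1 + c0 ^ 2) ^ (-(p - 1))))
      = 2 * (ν / (ν - 1)) * (C / β) * (1 + β ^ 2 / ν) ^ (-((ν - 1) / 2)) := by
    have hcsq : 1 + c0 ^ 2 = 1 + β ^ 2 / ν := by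
      rw [hc0def, div_pow, Real.sq_sqrt hν0.le]
    have hexp : -(p - 1) = -((ν - 1) / 2) := by rw [hpdef]; ring
    rw [hcsq, hexp, hc0def, show p - 1 = (ν - 1)/2 by rw [hpdef]; ring]
    exact hbnd_aux hβ (by intro hcon; linarith) hsν (Real.mul_self_sqrt hν0.le)
  rw [hset, hcov]
  have hrw : ∫ u in Ioo (-a0) a0, |k| • f (μ + k * u) = C * Real.sqrt ν * (I - 2 * T) := by
    simp_rw [hpoint]
    rw [integral_const_mul, hIoo]
  rw [hrw]
  have h2T : C * Real.sqrt ν * (2 * T)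
      ≤ 2 * (ν / (ν - 1)) * (C / β) * (1 + β ^ 2 / ν) ^ (-((ν - 1) / 2)) := by
    rw [← hbnd]
    have hcc : (0:ℝ) ≤ C * Real.sqrt ν := by positivity
    apply mul_le_mul_of_nonneg_left _ hcc
    linarith
  have hexpand : C * Real.sqrt ν * (I - 2 * T)
      = C * Real.sqrt ν * I - C * Real.sqrt ν * (2 * T) := by ring
  rw [hexpand, hnorm]
  linarith
end
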